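/- For l, h > 0 define F(l,h) = ((1+l)² e^{2h} - (1-l)² e^{-2h} + 2(1-l²) sin(2h)) / ((1+l)² e^{2h} - (1-l)² e^{-2h} - 2(1-l²) sin(2h)). Let d = 1 + e^{(2+2i)h} - l + e^{(2+2i)h} l, A = (l-1)/d, B = -e^{(2+2i)h}(l+1)/d. Then the real part of (1+i)(A - B) is nonzero and Im((1+i)(A - B)) / Re((1+i)(A - B)) = F(l,h). -/

import Mathlib

set_option maxHeartbeats 1000000
open Complex

theorem deflection_angle_tangent_formula (l h : ℝ) (hl : 0 < l) (hh : 0 < h)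
    (d A B : ℂ)
    (hd : d = 1 + Complex.exp ((2 + 2 * Complex.I) * h) - l
        + Complex.exp ((2 + 2 * Complex.I) * h) * l)
    (hA : A = ((l : ℂ) - 1) / d)
    (hB : B = -(Complex.exp ((2 + 2 * Complex.I) * h) * ((l : ℂ) + 1)) / d) :
    ((1 + Complex.I) * (A - B)).re ≠ 0 ∧
    ((1 + Complex.I) * (A - B)).im / ((1 + Complex.I) * (A - B)).re
      = ((1 + l) ^ 2 * Real.exp (2 * h) - (1 - l) ^ 2 * Real.exp (-(2 * h))
          + 2 * (1 - l ^ 2) * Real.sin (2 * h))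
        / ((1 + l) ^ 2 * Real.exp (2 * h) - (1 - l) ^ 2 * Real.exp (-(2 * h))
          - 2 * (1 - l ^ 2) * Real.sin (2 * h)) := by
  set t := Real.exp (2 * h) with ht
  set s := Real.sin (2 * h) with hs
  set c := Real.cos (2 * h) with hc
  set a := 1 - l with ha
  set b := 1 + l with hb
  set E := Complex.exp ((2 + 2 * Complex.I) * h) with hE
  have ht1 : 1 < t := by
    have := Real.add_one_le_exp (2 * h); rw [ht]; linarith
  have ht0 : 0 < t := by linarith
  have hab : |a| < b := by
    rw [abs_lt]; constructor <;> simp [ha, hb] <;> linarith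
  have hb0 : 0 < b := by simp [hb]; linarith
  have ha0 : 0 ≤ |a| := abs_nonneg a
  clear_value a b
  have hsc : s ^ 2 + c ^ 2 = 1 := by rw [hs, hc]; exact Real.sin_sq_add_cos_sq _
  have hsinh : 2 * (2 * h) < t - t⁻¹ := by
    have h1 : 2 * h < Real.sinh (2 * h) := Real.self_lt_sinh_iff.mpr (by linarith)
    rw [Real.sinh_eq] at h1
    rw [ht, ← Real.exp_neg]; linarith
  have hsabs : |s| < 2 * h := by
    have hp := Real.sin_lt (show (0:ℝ) < 2 * h by linarith)
    have hm : -(2 * h) < Real.sin (2 * h) := by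
      rcases lt_or_ge (2 * h) Real.pi with hlt | hge
      · have := Real.sin_pos_of_pos_of_lt_pi (show (0:ℝ) < 2 * h by linarith) hlt
        linarith
      · have h1 := Real.neg_one_le_sin (2 * h)
        have h2 := Real.pi_gt_three
        linarith
    rw [abs_lt, hs]; constructor <;> linarith
  have hsb : 2 * t * |s| < t ^ 2 - 1 := by
    have h2 : 2 * t * |s| < 2 * t * (2 * h) := by
      have := mul_lt_mul_of_pos_left hsabs (show (0:ℝ) < 2 * t by linarith)
      linarith
    have h3 : t * (t - t⁻¹) = t ^ 2 - 1 := by field_simp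
    nlinarith
  have hEre : E.re = t * c := by
    rw [hE, Complex.exp_re]
    congr 1 <;> [skip; congr 1] <;> simp [ht, hc]
  have hEim : E.im = t * s := by
    rw [hE, Complex.exp_im]
    congr 1 <;> [skip; congr 1] <;> simp [ht, hs]
  have hdre : d.re = a + b * t * c := by
    simp [hd, hEre, ha, hb]; ring
  have hdim : d.im = b * t * s := by
    simp [hd, hEim, hb]; ring
  have hexp : Real.exp (-(2 * h)) = t⁻¹ := by rw [Real.exp_neg, ht]
  clear_value t s c E
  set D := (a + b * t * c) ^ 2 + (b * t * s) ^ 2 with hDdef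
  have hD : Complex.normSq d = D := by
    rw [Complex.normSq_apply, hdre, hdim, hDdef]; ring
  clear_value D
  have hc1 : |c| ≤ 1 := by rw [hc]; exact Real.abs_cos_le_one _
  have hac : |a * c| ≤ |a| := by
    rw [abs_mul]; nlinarith
  have hD0 : 0 < D := by
    have h1 : D = a ^ 2 + 2 * (a * c) * (b * t) + b ^ 2 * t ^ 2 := by
      rw [hDdef]; linear_combination (b * t) ^ 2 * hsc
    have p1 : 0 < b * t := mul_pos hb0 ht0
    have p2 : 0 ≤ b * t * (a * c + |a|) := by
      apply mul_nonneg p1.le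
      have := (abs_le.mp hac).1
      linarith
    have p3 : 0 < (b * t - |a|) ^ 2 := by
      have h' : |a| < b * t := by nlinarith
      exact pow_pos (by linarith) 2
    rw [h1]
    nlinarith [_root_.sq_abs a]
  have hAB : A - B = ((b : ℂ) * E - (a : ℂ)) / d := by
    rw [hA, hB, ha, hb]
    push_cast
    rw [div_sub_div_same]
    ring_nf
  set N := (1 + Complex.I) * (A - B) with hN
  have hzre : ((1 + Complex.I) * ((b : ℂ) * E - (a : ℂ))).re
      = (b * t * c - a) - b * t * s := by
    simp [Complex.mul_re, Complex.mul_im, Complex.sub_re, Complex.sub_im, hEre, hEim]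
    ring
  have hzim : ((1 + Complex.I) * ((b : ℂ) * E - (a : ℂ))).im
      = (b * t * c - a) + b * t * s := by
    simp [Complex.mul_re, Complex.mul_im, Complex.sub_re, Complex.sub_im, hEre, hEim]
    ring
  set X := b ^ 2 * t ^ 2 - a ^ 2 with hX
  set Y := 2 * a * b * t * s with hY
  have hre : N.re = (X - Y) / D := by
    rw [hN, hAB, ← mul_div_assoc, Complex.div_re, hzre, hzim, hdre, hdim, hD]
    rw [← add_div]
    congr 1
    rw [hX, hY]
    linear_combination (b * t) ^ 2 * hsc
  have him : N.im = (X + Y) / D := by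
    rw [hN, hAB, ← mul_div_assoc, Complex.div_im, hzre, hzim, hdre, hdim, hD]
    rw [div_sub_div_same]
    congr 1
    rw [hX, hY]
    linear_combination (b * t) ^ 2 * hsc
  have hXY : 0 < X - Y := by
    have h1 : a * b * t * s ≤ |a| * b * t * |s| := by
      calc a * b * t * s ≤ |a * b * t * s| := le_abs_self _
        _ = |a| * b * t * |s| := by
          rw [abs_mul, abs_mul, abs_mul, abs_of_pos hb0, abs_of_pos ht0]
    have h2 : 2 * (|a| * b * t * |s|) ≤ |a| * b * (t ^ 2 - 1) := by
      rcases eq_or_lt_of_le ha0 with hz | hz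
      · rw [← hz]; simp
      · have := mul_lt_mul_of_pos_left hsb (mul_pos hz hb0)
        nlinarith
    have h3 : (b - |a|) * (b * t ^ 2 + |a|) > 0 := by
      apply mul_pos (by linarith) (by nlinarith)
    rw [hX, hY]
    nlinarith [_root_.sq_abs a]
  have hNre0 : N.re ≠ 0 := by
    rw [hre]
    positivity
  refine ⟨hNre0, ?_⟩
  rw [him, hre]
  rw [hexp]
  set num := b ^ 2 * t - a ^ 2 * t⁻¹ + 2 * (a * b) * s with hnum
  set den := b ^ 2 * t - a ^ 2 * t⁻¹ - 2 * (a * b) * s with hden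
  have h1 : X + Y = t * num := by rw [hX, hY, hnum]; field_simp
  have h2 : X - Y = t * den := by rw [hX, hY, hden]; field_simp
  have hXYne : X - Y ≠ 0 := ne_of_gt hXY
  have hDne : D ≠ 0 := ne_of_gt hD0
  have goal1 : (X + Y) / D / ((X - Y) / D) = (X + Y) / (X - Y) := by
    field_simp
  rw [goal1, h1, h2, mul_div_mul_left _ _ (ne_of_gt ht0)]
  rw [hnum, hden, ha, hb]
  ring_nf
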